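/- Burnside's vanishing theorem: if G is a finite group and χ is an irreducible complex character of G with χ(1) > 1, then there exists g ∈ G with χ(g) = 0. -/

import Mathlib

open CategoryTheory Polynomial Module
open CategoryTheory

lemma trace_pow_eq_sum {n : ℕ} (hn : 0 < n) {W : Type} [AddCommGroup W] [Module ℂ W]
    [FiniteDimensional ℂ W] (f : Module.End ℂ W) (hf : f ^ n = 1) :
    ∃ (s : Finset ℂ) (d : ℂ → ℕ), (∀ μ ∈ s, μ ^ n = 1) ∧
      ∀ m : ℕ, LinearMap.trace ℂ W (f ^ m) = ∑ μ ∈ s, (d μ : ℂ) * μ ^ m := by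
  have hsq : Squarefree ((X : ℂ[X]) ^ n - 1) := by
    have := Polynomial.separable_X_pow_sub_C (1 : ℂ)
      (by exact_mod_cast Nat.cast_ne_zero.mpr hn.ne') one_ne_zero
    simpa using this.squarefree
  have haev : aeval f ((X : ℂ[X]) ^ n - 1) = 0 := by
    simp [hf]
  have hss : f.IsSemisimple := Module.End.isSemisimple_of_squarefree_aeval_eq_zero hsq haev
  have hfs : f.IsFinitelySemisimple := hss.isFinitelySemisimple
  have htop : ⨆ μ, f.eigenspace μ = ⊤ := by
    simp_rw [← hfs.maxGenEigenspace_eq_eigenspace]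
    exact f.iSup_maxGenEigenspace_eq_top
  have hind : iSupIndep f.eigenspace := f.eigenspaces_iSupIndep
  have hint : DirectSum.IsInternal f.eigenspace :=
    (DirectSum.isInternal_submodule_iff_iSupIndep_and_iSup_eq_top _).mpr ⟨hind, htop⟩
  have hfin : {μ : ℂ | f.eigenspace μ ≠ ⊥}.Finite :=
    WellFoundedGT.finite_ne_bot_of_iSupIndep hind
  have hpow : ∀ (μ : ℂ) (x : W), x ∈ f.eigenspace μ → ∀ m : ℕ, (f ^ m) x = μ ^ m • x := by
    intro μ x hx m
    induction m with
    | zero => simp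
    | succ m ih =>
      rw [pow_succ, Module.End.mul_apply, Module.End.mem_eigenspace_iff.mp hx, map_smul, ih,
        pow_succ', mul_smul, smul_comm]
  have hmaps : ∀ (m : ℕ) (μ : ℂ), Set.MapsTo (f ^ m) (f.eigenspace μ) (f.eigenspace μ) := by
    intro m μ x hx
    have := hpow μ x hx m
    show (f ^ m) x ∈ (f.eigenspace μ : Set W)
    rw [SetLike.mem_coe] at hx ⊢
    rw [this]
    exact Submodule.smul_mem _ _ hx
  refine ⟨hfin.toFinset, fun μ => finrank ℂ (f.eigenspace μ), ?_, ?_⟩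
  · intro μ hμ
    rw [Set.Finite.mem_toFinset] at hμ
    obtain ⟨x, hx, hx0⟩ := Submodule.exists_mem_ne_zero_of_ne_bot hμ
    have h1 := hpow μ x hx n
    rw [hf] at h1
    have : (μ ^ n - 1) • x = 0 := by
      rw [sub_smul, one_smul, ← h1]
      simp
    rcases smul_eq_zero.mp this with h | h
    · exact sub_eq_zero.mp h
    · exact absurd h hx0
  · intro m
    rw [LinearMap.trace_eq_sum_trace_restrict' hint hfin (fun μ => hmaps m μ)]
    refine Finset.sum_congr rfl fun μ _ => ?_
    have : (f ^ m).restrict (hmaps m μ) = (μ ^ m : ℂ) • LinearMap.id := by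
      refine LinearMap.ext fun x => Subtype.ext ?_
      have hx2 : (x : W) ∈ f.eigenspace μ := x.2
      exact (hpow μ x hx2 m).trans (by simp)
    rw [this, LinearMap.map_smul, LinearMap.trace_id, smul_eq_mul, mul_comm]

lemma sum_char_mul_inv (G : Type) [Group G] [Fintype G] (V : FDRep ℂ G) [Simple V] :
    ∑ g : G, V.character g * V.character g⁻¹ = (Fintype.card G : ℂ) := by
  have hcard : (Fintype.card G : ℂ) ≠ 0 := Nat.cast_ne_zero.mpr Fintype.card_ne_zero
  letI : Invertible (Nat.card G : ℂ) := invertibleOfNonzero (by rw [Nat.card_eq_fintype_card]; exact hcard)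
  have h := FDRep.char_orthonormal (k := ℂ) (G := G) V V
  rw [if_pos ⟨Iso.refl V⟩] at h
  have := congrArg (fun z => (Fintype.card G : ℂ) * z) h
  rw [Nat.card_eq_fintype_card] at this
  simpa [smul_eq_mul, ← mul_assoc, mul_inv_cancel₀ hcard] using this

set_option maxHeartbeats 2000000

/-- **Burnside's vanishing theorem**: a non-linear irreducible complex character of a
finite group vanishes on some element. -/
theorem burnside_vanishing (G : Type) [Group G] [Fintype G]
    (V : FDRep ℂ G) [Simple V] (hdeg : 1 < Module.finrank ℂ V) :
    ∃ g : G, V.character g = 0 := by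
  classical
  by_contra hcon
  push_neg at hcon
  set n := Fintype.card G with hn'
  have hn : 0 < n := Fintype.card_pos
  haveI : NeZero n := ⟨hn.ne'⟩
  -- eigenvalue decompositions of all character values
  have H : ∀ g : G, ∃ (s : Finset ℂ) (d : ℂ → ℕ), (∀ μ ∈ s, μ ^ n = 1) ∧
      ∀ m : ℕ, V.character (g ^ m) = ∑ μ ∈ s, (d μ : ℂ) * μ ^ m := by
    intro g
    have hf : (V.ρ g) ^ n = 1 := by
      rw [← map_pow, hn', pow_card_eq_one, map_one]
    obtain ⟨s, d, h1, h2⟩ := trace_pow_eq_sum hn (V.ρ g) hf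
    refine ⟨s, d, h1, fun m => ?_⟩
    rw [show V.character (g ^ m) = LinearMap.trace ℂ V (V.ρ (g ^ m)) from rfl, map_pow]
    exact h2 m
  choose s d hroot hχ using H
  set χ := V.character with hχdef
  set D := Module.finrank ℂ V with hD
  have hχ1 : χ 1 = (D : ℂ) := V.char_one
  have hD2 : 2 ≤ D := hdeg
  -- character values at inverses are conjugates
  have habs : ∀ μ : ℂ, μ ^ n = 1 → ‖μ‖ = 1 := fun μ h =>
    Complex.norm_eq_one_of_pow_eq_one h hn.ne'
  have hconj : ∀ g : G, χ g⁻¹ = (starRingEnd ℂ) (χ g) := by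
    intro g
    have hginv : g⁻¹ = g ^ (n - 1) := by
      have h3 : g ^ (n - 1) * g = 1 := by
        rw [← pow_succ, Nat.sub_add_cancel hn, hn', pow_card_eq_one]
      exact (eq_inv_of_mul_eq_one_left h3).symm
    have h1 : χ g⁻¹ = ∑ μ ∈ s g, (d g μ : ℂ) * μ ^ (n - 1) := by
      rw [hginv]; exact hχ g (n - 1)
    have h2 : χ g = ∑ μ ∈ s g, (d g μ : ℂ) * μ := by
      have := hχ g 1
      simpa using this
    rw [h1, h2, map_sum]
    refine Finset.sum_congr rfl fun μ hμ => ?_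
    rw [map_mul]
    congr 1
    · simp
    · have hu := hroot g μ hμ
      have h3 : μ ^ (n - 1) * μ = 1 := by rw [← pow_succ, Nat.sub_add_cancel hn, hu]
      rw [eq_inv_of_mul_eq_one_left h3, Complex.inv_eq_conj (habs μ hu)]
  -- orthogonality
  have hsumC : ∑ g : G, χ g * χ g⁻¹ = (n : ℂ) := sum_char_mul_inv G V
  set p : G → ℝ := fun g => Complex.normSq (χ g) with hp
  have hsum : ∑ g : G, p g = (n : ℝ) := by
    have h5 : ∑ g : G, ((p g : ℝ) : ℂ) = (n : ℂ) := by
      rw [← hsumC]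
      exact Finset.sum_congr rfl fun g _ => by rw [hconj g, Complex.mul_conj, hp]
    exact_mod_cast h5
  have hp0 : ∀ g, 0 ≤ p g := fun g => Complex.normSq_nonneg _
  have hppos : ∀ g, 0 < p g := fun g => Complex.normSq_pos.mpr (hcon g)
  have hp1 : p 1 = (D : ℝ) ^ 2 := by
    rw [hp]; simp only [hχ1, Complex.normSq_natCast]; ring
  have hDn : (D : ℝ) ^ 2 ≤ (n : ℝ) := by
    rw [← hsum, ← hp1]
    exact Finset.single_le_sum (fun g _ => hp0 g) (Finset.mem_univ 1)
  have hD2' : (2 : ℝ) ≤ (D : ℝ) := by exact_mod_cast hD2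
  have h4n : (4 : ℝ) ≤ (n : ℝ) := le_trans (by nlinarith) hDn
  have hn4 : 4 ≤ n := by exact_mod_cast h4n
  have hn1 : 1 < n := by omega
  -- cyclotomic field setup
  set N : ℕ+ := ⟨n, hn⟩ with hN
  set Kc := CyclotomicField N ℚ with hKc
  haveI : IsCyclotomicExtension {(N : ℕ)} ℚ Kc :=
    CyclotomicField.isCyclotomicExtension (N : ℕ) ℚ
  haveI : FiniteDimensional ℚ Kc := IsCyclotomicExtension.finiteDimensional {(N : ℕ)} ℚ Kc
  haveI : IsGalois ℚ Kc := IsCyclotomicExtension.isGalois {(N : ℕ)} ℚ Kc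
  haveI : Algebra.IsAlgebraic ℚ Kc := Algebra.IsAlgebraic.of_finite ℚ Kc
  set φ : Kc →ₐ[ℚ] ℂ := IsAlgClosed.lift with hφ
  have hφinj : Function.Injective φ := φ.injective
  set ζ' : Kc := IsCyclotomicExtension.zeta N ℚ Kc with hζpdef
  have hζ' : IsPrimitiveRoot ζ' n := IsCyclotomicExtension.zeta_spec N ℚ Kc
  set ζ : ℂ := φ ζ' with hzdef
  have hζ : IsPrimitiveRoot ζ n := hζ'.map_of_injective hφinj
  have key : ∀ σ : Kc ≃ₐ[ℚ] Kc, ∃ k, k.Coprime n ∧ σ ζ' = ζ' ^ k := by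
    intro σ
    have h2 : IsPrimitiveRoot (σ ζ') n := hζ'.map_of_injective σ.injective
    obtain ⟨i, -, hcop, hi⟩ := (hζ'.isPrimitiveRoot_iff).mp h2
    exact ⟨i, hcop, hi.symm⟩
  have fix : ∀ x : Kc, (∀ σ : Kc ≃ₐ[ℚ] Kc, σ x = x) → ∃ q : ℚ, algebraMap ℚ Kc q = x := by
    intro x hx
    have hmem : x ∈ IntermediateField.fixedField (⊤ : Subgroup (Kc ≃ₐ[ℚ] Kc)) := fun σ => hx σ
    rw [← IntermediateField.fixingSubgroup_bot,
      IsGalois.fixedField_fixingSubgroup (⊥ : IntermediateField ℚ Kc)] at hmem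
    obtain ⟨q, hq⟩ := IntermediateField.mem_bot.mp hmem
    exact ⟨q, hq⟩
  -- exponents for eigenvalues
  have he0 : ∀ (g : G) (μ : ℂ), ∃ i : ℕ, μ ∈ s g → ζ ^ i = μ := by
    intro g μ
    by_cases hμ : μ ∈ s g
    · obtain ⟨i, -, hi⟩ := hζ.eq_pow_of_pow_eq_one (hroot g μ hμ)
      exact ⟨i, fun _ => hi⟩
    · exact ⟨0, fun h => absurd h hμ⟩
  choose e he using he0
  set y : G → ℕ → Kc := fun g k => ∑ μ ∈ s g, (d g μ : Kc) * (ζ' ^ e g μ) ^ k with hy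
  have hφy : ∀ g k, φ (y g k) = χ (g ^ k) := by
    intro g k
    rw [hy]
    simp only
    rw [map_sum, hχ g k]
    refine Finset.sum_congr rfl fun μ hμ => ?_
    rw [map_mul, map_pow, map_pow, map_natCast, ← hzdef, he g μ hμ]
  set x : Kc := ∏ g : G, y g 1 with hx
  set P : ℂ := ∏ g : G, χ g with hP
  have hφx : φ x = P := by
    rw [hx, map_prod, hP]
    exact Finset.prod_congr rfl fun g _ => by rw [hφy g 1, pow_one]
  have hfix : ∀ σ : Kc ≃ₐ[ℚ] Kc, σ x = x := by
    intro σ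
    obtain ⟨k, hcop, hσζ⟩ := key σ
    have hσy : ∀ g : G, σ (y g 1) = y g k := by
      intro g
      rw [hy]
      simp only
      rw [map_sum]
      refine Finset.sum_congr rfl fun μ hμ => ?_
      rw [map_mul, map_pow, map_pow, map_natCast, hσζ, pow_one, pow_right_comm]
    have hbij : Function.Bijective (fun g : G => g ^ k) := by
      have hc : (Nat.card G).Coprime k := by
        rw [Nat.card_eq_fintype_card, ← hn']; exact hcop.symm
      exact hc.pow_left_bijective
    apply hφinj
    have h6 : σ x = ∏ g : G, y g k := by
      rw [hx, map_prod]
      exact Finset.prod_congr rfl fun g _ => hσy g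
    rw [h6, map_prod, hφx, hP]
    calc ∏ g : G, φ (y g k) = ∏ g : G, χ (g ^ k) :=
          Finset.prod_congr rfl fun g _ => hφy g k
      _ = ∏ g : G, χ g := Fintype.prod_bijective _ hbij _ _ (fun g => rfl)
  obtain ⟨q, hq⟩ := fix x hfix
  have hPq : P = (q : ℂ) := by
    rw [← hφx, ← hq, AlgHom.commutes]
    simp
  -- integrality
  have hintμ : ∀ g : G, ∀ μ ∈ s g, μ ∈ integralClosure ℤ ℂ := by
    intro g μ hμ
    refine ⟨X ^ n - C 1, monic_X_pow_sub_C 1 hn.ne', ?_⟩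
    simp [hroot g μ hμ]
  have hintχ : ∀ g : G, χ g ∈ integralClosure ℤ ℂ := by
    intro g
    have h2 : χ g = ∑ μ ∈ s g, (d g μ : ℂ) * μ := by simpa using hχ g 1
    rw [h2]
    exact Subalgebra.sum_mem _ fun μ hμ =>
      Subalgebra.mul_mem _ (Subalgebra.natCast_mem _ _) (hintμ g μ hμ)
  have hintP : IsIntegral ℤ P := by
    have h9 : P ∈ integralClosure ℤ ℂ := by
      rw [hP]; exact Subalgebra.prod_mem _ fun g _ => hintχ g
    exact h9
  have hqint : IsIntegral ℤ q := by
    have h7 : algebraMap ℚ ℂ q = P := by rw [hPq]; simp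
    rw [← isIntegral_algebraMap_iff (algebraMap ℚ ℂ).injective, h7]
    exact hintP
  obtain ⟨z, hz⟩ := IsIntegrallyClosed.isIntegral_iff.mp hqint
  have hPz : P = (z : ℂ) := by
    rw [hPq, ← hz]
    push_cast
    rfl
  have hP0 : P ≠ 0 := by rw [hP]; exact Finset.prod_ne_zero_iff.mpr fun g _ => hcon g
  have hz0 : z ≠ 0 := by rintro rfl; rw [hPz] at hP0; simp at hP0
  have hQz : ∏ g : G, p g = (z : ℝ) * (z : ℝ) := by
    have h10 : ∏ g : G, p g = Complex.normSq P := by rw [hP, map_prod]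
    rw [h10, hPz, Complex.normSq_intCast]
  have hQ1 : (1 : ℝ) ≤ ∏ g : G, p g := by
    rw [hQz]
    have h8 : (1 : ℤ) ≤ z * z := Int.lt_iff_add_one_le.mp (mul_self_pos.mpr hz0)
    exact_mod_cast h8
  -- AM-GM and Bernoulli
  set t : Finset G := Finset.univ.erase 1 with ht
  set m : ℕ := n - 1 with hm
  have hmcard : t.card = m := by
    rw [ht, Finset.card_erase_of_mem (Finset.mem_univ 1), Finset.card_univ, ← hn']
  have hm3 : 3 ≤ m := by omega
  have hmR : (m : ℝ) = (n : ℝ) - 1 := by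
    rw [hm]; push_cast [Nat.cast_sub hn] ; ring
  have hm0 : (0 : ℝ) < (m : ℝ) := by
    have : 0 < m := by omega
    exact_mod_cast this
  have hsumt : ∑ g ∈ t, p g = (n : ℝ) - (D : ℝ) ^ 2 := by
    have h11 := Finset.sum_erase_add Finset.univ p (Finset.mem_univ (1 : G))
    rw [hp1] at h11
    rw [ht]
    rw [hsum] at h11
    linarith
  have hprodfac : ∏ g : G, p g = (D : ℝ) ^ 2 * ∏ g ∈ t, p g := by
    have h12 := Finset.mul_prod_erase Finset.univ p (Finset.mem_univ (1 : G))
    rw [hp1] at h12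
    rw [ht, ← h12]
  set A : ℝ := ((n : ℝ) - (D : ℝ) ^ 2) / m with hA
  have hA0 : 0 ≤ A := div_nonneg (by linarith) hm0.le
  have hAM : ∏ g ∈ t, p g ≤ A ^ m := by
    have hgm := Real.geom_mean_le_arith_mean_weighted t (fun _ => (m : ℝ)⁻¹) p
      (fun _ _ => by positivity) (by rw [Finset.sum_const, hmcard, nsmul_eq_mul]; field_simp)
      (fun g _ => hp0 g)
    have hrhs : ∑ g ∈ t, (m : ℝ)⁻¹ * p g = A := by
      rw [← Finset.mul_sum, hsumt, hA]
      field_simp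
    rw [hrhs] at hgm
    have hlhs0 : 0 ≤ ∏ g ∈ t, p g ^ ((m : ℝ)⁻¹) :=
      Finset.prod_nonneg fun g _ => Real.rpow_nonneg (hp0 g) _
    have h13 := pow_le_pow_left₀ hlhs0 hgm m
    rw [← Finset.prod_pow] at h13
    have heach : ∀ g ∈ t, (p g ^ ((m : ℝ)⁻¹)) ^ m = p g := by
      intro g _
      rw [← Real.rpow_natCast (p g ^ ((m : ℝ)⁻¹)) m, ← Real.rpow_mul (hp0 g),
        inv_mul_cancel₀ hm0.ne', Real.rpow_one]
    rw [Finset.prod_congr rfl heach] at h13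
    exact h13
  set t0 : ℝ := ((D : ℝ) ^ 2 - 1) / m with ht0
  have hAt : A = 1 - t0 := by
    have hmne : (m : ℝ) ≠ 0 := hm0.ne'
    have h16 : (n : ℝ) - (D : ℝ) ^ 2 = (m : ℝ) - ((D : ℝ) ^ 2 - 1) := by rw [hmR]; ring
    rw [hA, ht0, h16, sub_div, div_self hmne]
  have ht0pos : 0 < t0 := div_pos (by nlinarith) hm0
  have ht0le : t0 ≤ 1 := by
    rw [ht0, div_le_one hm0, hmR]
    linarith [hDn]
  have hfinal : (D : ℝ) ^ 2 * A ^ m < 1 := by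
    rcases eq_or_lt_of_le ht0le with heq | hlt
    · rw [hAt, heq]
      simp only [sub_self, zero_pow (by omega : m ≠ 0), mul_zero]
      norm_num
    · have h1t : 0 < 1 - t0 := by linarith
      have hm1 : (1 : ℝ) < (m : ℝ) := by
        have : 1 < m := by omega
        exact_mod_cast this
      have hBern : 1 + (m : ℝ) * t0 < (1 + t0) ^ m := by
        have h14 := one_add_mul_self_lt_rpow_one_add (by linarith : (-1 : ℝ) ≤ t0)
          ht0pos.ne' hm1
        rwa [Real.rpow_natCast] at h14
      have hmt0 : (m : ℝ) * t0 = (D : ℝ) ^ 2 - 1 := by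
        rw [ht0]; field_simp
      have hD2lt : (D : ℝ) ^ 2 < (1 + t0) ^ m := by
        rw [hmt0] at hBern; linarith
      have hsq : (1 - t0) ^ m * (1 + t0) ^ m ≤ 1 := by
        rw [← mul_pow]
        have h15 : (1 - t0) * (1 + t0) = 1 - t0 ^ 2 := by ring
        rw [h15]
        exact pow_le_one₀ (by nlinarith) (by nlinarith)
      have hpos : 0 < (1 - t0) ^ m := pow_pos h1t m
      calc (D : ℝ) ^ 2 * A ^ m = (D : ℝ) ^ 2 * (1 - t0) ^ m := by rw [hAt]
        _ < (1 + t0) ^ m * (1 - t0) ^ m := mul_lt_mul_of_pos_right hD2lt hpos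
        _ ≤ 1 := by rw [mul_comm]; exact hsq
  have hcontra : (1 : ℝ) < 1 :=
    calc (1 : ℝ) ≤ ∏ g : G, p g := hQ1
      _ = (D : ℝ) ^ 2 * ∏ g ∈ t, p g := hprodfac
      _ ≤ (D : ℝ) ^ 2 * A ^ m := mul_le_mul_of_nonneg_left hAM (by positivity)
      _ < 1 := hfinal
  exact absurd hcontra (lt_irrefl 1)
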